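/- Let T be a Hausdorff topological group acting continuously on a compact Hausdorff space X such that the action is minimal and proximal, and let H be a subnormal co-compact closed subgroup of T. Then the restricted action of H on X is minimal and proximal. -/

import Mathlib

open MulAction

/-- `H` is a *subnormal* subgroup of `T`: there is a finite chain
`H = H₀ ◁ H₁ ◁ ⋯ ◁ Hₙ = T` with each term normal in the next. -/
def Subgroup.IsSubnormal' {T : Type*} [Group T] (H : Subgroup T) : Prop :=
  ∃ (n : ℕ) (c : Fin (n + 1) → Subgroup T),
    c 0 = H ∧ c (Fin.last n) = ⊤ ∧
      ∀ i : Fin n, c i.castSucc ≤ c i.succ ∧ ((c i.castSucc).subgroupOf (c i.succ)).Normal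

section Aux

variable {T : Type*} [Group T] [TopologicalSpace T] [IsTopologicalGroup T]

/-- Projection lemma: the image under `Prod.snd` of a closed, right-`K`-saturated subset of
`T × W` is closed, provided `T ⧸ K` is compact. -/
lemma proj_closed_of_saturated {W : Type*} [TopologicalSpace W]
    (K : Subgroup T) (hcc : CompactSpace (T ⧸ K))
    (E : Set (T × W)) (hE : IsClosed E)
    (hsat : ∀ t k, k ∈ K → ∀ w, ((t * k, w) ∈ E ↔ (t, w) ∈ E)) :
    IsClosed (Prod.snd '' E) := by
  set f : T × W → (T ⧸ K) × W := fun p => ((p.1 : T ⧸ K), p.2) with hf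
  have hopen : IsOpenMap f := (QuotientGroup.isOpenMap_coe (N := K)).prodMap IsOpenMap.id
  have hcompl : (f '' E)ᶜ = f '' Eᶜ := by
    ext ⟨q, w⟩
    constructor
    · intro hq
      obtain ⟨t, rfl⟩ := QuotientGroup.mk_surjective q
      refine ⟨(t, w), ?_, rfl⟩
      intro hmem
      exact hq ⟨(t, w), hmem, rfl⟩
    · rintro ⟨⟨t, w'⟩, htw, heq⟩
      have hw : w' = w := congrArg Prod.snd heq
      have hqt : (t : T ⧸ K) = q := congrArg Prod.fst heq
      rintro ⟨⟨t', w''⟩, ht'E, heq'⟩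
      have hw2 : w'' = w := congrArg Prod.snd heq'
      have hqt' : (t' : T ⧸ K) = q := congrArg Prod.fst heq'
      have hk : t'⁻¹ * t ∈ K := QuotientGroup.eq.mp (hqt'.trans hqt.symm)
      have hmem : (t' * (t'⁻¹ * t), w'') ∈ E := (hsat t' _ hk w'').mpr ht'E
      rw [mul_inv_cancel_left, hw2, ← hw] at hmem
      exact htw hmem
  have hFclosed : IsClosed (f '' E) := by
    rw [← isOpen_compl_iff, hcompl]
    exact hopen _ hE.isOpen_compl
  have himg : Prod.snd '' (f '' E) = Prod.snd '' E := by
    ext w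
    constructor
    · rintro ⟨⟨q, w'⟩, ⟨⟨t, w''⟩, htE, heq⟩, rfl⟩
      exact ⟨(t, w''), htE, congrArg Prod.snd heq⟩
    · rintro ⟨⟨t, w'⟩, htE, rfl⟩
      exact ⟨f (t, w'), ⟨(t, w'), htE, rfl⟩, rfl⟩
  rw [← himg]
  exact isClosedMap_snd_of_compactSpace _ hFclosed

/-- Union-of-translates lemma: if `C` is closed and `K`-invariant, `G` is a closed subgroup
containing `K`, and `T ⧸ K` is compact, then `⋃_{g ∈ G} g • C` is closed. -/
lemma union_smul_closed {W : Type*} [TopologicalSpace W] [MulAction T W] [ContinuousSMul T W]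
    (K G : Subgroup T) (hKG : K ≤ G) (hGc : IsClosed (G : Set T))
    (hcc : CompactSpace (T ⧸ K))
    (C : Set W) (hC : IsClosed C) (hCK : ∀ k ∈ K, ∀ c ∈ C, k • c ∈ C) :
    IsClosed {w : W | ∃ g ∈ G, g⁻¹ • w ∈ C} := by
  have hE : IsClosed {p : T × W | p.1 ∈ G ∧ p.1⁻¹ • p.2 ∈ C} := by
    apply IsClosed.inter
    · exact hGc.preimage continuous_fst
    · exact hC.preimage ((continuous_fst.inv).smul continuous_snd)
  have := proj_closed_of_saturated K hcc _ hE ?_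
  · convert this using 1
    ext w
    constructor
    · rintro ⟨g, hg, hgw⟩
      exact ⟨(g, w), ⟨hg, hgw⟩, rfl⟩
    · rintro ⟨⟨t, w'⟩, ⟨htG, htC⟩, rfl⟩
      exact ⟨t, htG, htC⟩
  · intro t k hk w
    simp only [Set.mem_setOf_eq, mul_inv_rev, mul_smul]
    constructor
    · rintro ⟨htk, hc⟩
      refine ⟨?_, ?_⟩
      · have := mul_mem htk (inv_mem (hKG hk))
        rwa [mul_assoc, mul_inv_cancel, mul_one] at this
      · have := hCK k hk _ hc
        rwa [smul_inv_smul] at this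
    · rintro ⟨ht, hc⟩
      exact ⟨mul_mem ht (hKG hk), hCK k⁻¹ (inv_mem hk) _ hc⟩

variable {X : Type*} [TopologicalSpace X] [CompactSpace X] [MulAction T X] [ContinuousSMul T X]

/-- Proximality passes to co-compact subgroups. -/
lemma prox_restrict
    (K G : Subgroup T) (hKG : K ≤ G) (hGc : IsClosed (G : Set T))
    (hcc : CompactSpace (T ⧸ K))
    (hproxG : ∀ x₁ x₂ : X,
      (closure ((fun g => (g • x₁, g • x₂)) '' (G : Set T)) ∩ Set.diagonal X).Nonempty) :
    ∀ x₁ x₂ : X,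
      (closure ((fun g => (g • x₁, g • x₂)) '' (K : Set T)) ∩ Set.diagonal X).Nonempty := by
  intro x₁ x₂
  set C : Set (X × X) := closure ((fun g => (g • x₁, g • x₂)) '' (K : Set T)) with hCdef
  have hC : IsClosed C := isClosed_closure
  have hCK : ∀ k ∈ K, ∀ c ∈ C, k • c ∈ C := by
    intro k hk
    have hmt : Set.MapsTo (fun c => k • c) ((fun g => (g • x₁, g • x₂)) '' (K : Set T)) C := by
      rintro p ⟨g, hg, rfl⟩
      refine subset_closure ⟨k * g, mul_mem hk hg, ?_⟩
      simp [Prod.smul_def, mul_smul]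
    have := hmt.closure (continuous_const_smul k)
    intro c hc
    exact closure_minimal (fun y hy => hy) hC (this hc)
  have hS : IsClosed {w : X × X | ∃ g ∈ G, g⁻¹ • w ∈ C} :=
    union_smul_closed K G hKG hGc hcc C hC hCK
  have hsub : closure ((fun g => (g • x₁, g • x₂)) '' (G : Set T))
      ⊆ {w : X × X | ∃ g ∈ G, g⁻¹ • w ∈ C} := by
    apply closure_minimal _ hS
    rintro p ⟨g, hg, rfl⟩
    refine ⟨g, hg, ?_⟩
    have hp : ((x₁, x₂) : X × X) ∈ C :=
      subset_closure ⟨1, one_mem K, by simp⟩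
    show g⁻¹ • ((g • x₁, g • x₂) : X × X) ∈ C
    simpa [Prod.smul_mk, inv_smul_smul] using hp
  obtain ⟨z, hz₁, hz₂⟩ := hproxG x₁ x₂
  obtain ⟨g, hg, hgC⟩ := hsub hz₁
  refine ⟨g⁻¹ • z, hgC, ?_⟩
  have hzd : z.1 = z.2 := hz₂
  show (g⁻¹ • z).1 = (g⁻¹ • z).2
  simp [Prod.smul_def, hzd]

/-- Minimality passes to closed normal co-compact subgroups, given proximality of the
subgroup action. -/
lemma min_restrict
    (K G : Subgroup T) (hKG : K ≤ G) (hGc : IsClosed (G : Set T))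
    (hcc : CompactSpace (T ⧸ K))
    (hnorm : ∀ g ∈ G, ∀ k ∈ K, g * k * g⁻¹ ∈ K)
    (hminG : ∀ x : X, Dense ((fun g => g • x) '' (G : Set T)))
    (hproxK : ∀ x₁ x₂ : X,
      (closure ((fun g => (g • x₁, g • x₂)) '' (K : Set T)) ∩ Set.diagonal X).Nonempty) :
    ∀ x : X, Dense ((fun g => g • x) '' (K : Set T)) := by
  intro x
  set A : Set X := closure ((fun g => g • x) '' (K : Set T)) with hAdef
  rw [dense_iff_closure_eq, ← hAdef]
  -- it suffices to show `A = univ`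
  have hKinvset : ∀ (s : Set T), s = (K : Set T) → ∀ (z : X) (hz : True), True := fun _ _ _ _ => trivial
  have hinv_closure : ∀ (B : Set X), (∀ k ∈ K, ∀ b ∈ B, k • b ∈ B) →
      ∀ k ∈ K, ∀ b ∈ closure B, k • b ∈ closure B := by
    intro B hB k hk
    have hmt : Set.MapsTo (fun b => k • b) B (closure B) :=
      fun b hb => subset_closure (hB k hk b hb)
    have := hmt.closure (continuous_const_smul k)
    intro b hb
    exact closure_minimal (fun y hy => hy) isClosed_closure (this hb)
  -- the Zorn family
  set 𝒮 : Set (Set X) :=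
    {Y | Y ⊆ A ∧ Y.Nonempty ∧ IsClosed Y ∧ ∀ k ∈ K, ∀ y ∈ Y, k • y ∈ Y} with h𝒮def
  have hA𝒮 : A ∈ 𝒮 := by
    refine ⟨subset_rfl, ⟨x, subset_closure ⟨1, one_mem K, one_smul T x⟩⟩, isClosed_closure, ?_⟩
    exact hinv_closure _ (by rintro k hk b ⟨g, hg, rfl⟩; exact ⟨k * g, mul_mem hk hg, mul_smul k g x⟩)
  have hzorn : ∀ c ⊆ 𝒮, IsChain (· ⊆ ·) c → c.Nonempty →
      ∃ lb ∈ 𝒮, ∀ s ∈ c, lb ⊆ s := by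
    intro c hc𝒮 hchain hcne
    refine ⟨⋂₀ c, ⟨?_, ?_, ?_, ?_⟩, fun s hs => Set.sInter_subset_of_mem hs⟩
    · obtain ⟨s, hs⟩ := hcne
      exact (Set.sInter_subset_of_mem hs).trans (hc𝒮 hs).1
    · haveI : Nonempty c := hcne.to_subtype
      have hdir : DirectedOn (· ⊇ ·) c := by
        intro a ha b hb
        rcases eq_or_ne a b with rfl | hne
        · exact ⟨a, ha, subset_rfl, subset_rfl⟩
        · rcases hchain ha hb hne with h | h
          · exact ⟨a, ha, subset_rfl, h⟩
          · exact ⟨b, hb, h, subset_rfl⟩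
      refine IsCompact.nonempty_sInter_of_directed_nonempty_isCompact_isClosed
        hdir (fun U hU => (hc𝒮 hU).2.1)
        (fun U hU => (hc𝒮 hU).2.2.1.isCompact) (fun U hU => (hc𝒮 hU).2.2.1)
    · exact isClosed_sInter fun U hU => (hc𝒮 hU).2.2.1
    · intro k hk y hy
      exact fun U hU => (hc𝒮 hU).2.2.2 k hk y (hy U hU)
  obtain ⟨Y, hYA, hYminimal⟩ := zorn_superset_nonempty 𝒮 hzorn A hA𝒮
  obtain ⟨hYsubA, hYne, hYcl, hYK⟩ := hYminimal.1
  -- the union of `G`-translates of `Y` is everything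
  have hS : IsClosed {w : X | ∃ g ∈ G, g⁻¹ • w ∈ Y} :=
    union_smul_closed K G hKG hGc hcc Y hYcl hYK
  have hSuniv : {w : X | ∃ g ∈ G, g⁻¹ • w ∈ Y} = Set.univ := by
    obtain ⟨y, hy⟩ := hYne
    apply Set.eq_univ_of_univ_subset
    rw [← (dense_iff_closure_eq.mp (hminG y))]
    apply closure_minimal _ hS
    rintro p ⟨g, hg, rfl⟩
    exact ⟨g, hg, by simpa [inv_smul_smul] using hy⟩
  -- every point of `X` lies in `A`
  have hAuniv : ∀ w : X, w ∈ Y := by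
    intro w
    have hw : w ∈ {w : X | ∃ g ∈ G, g⁻¹ • w ∈ Y} := hSuniv ▸ Set.mem_univ w
    obtain ⟨g, hg, hgw⟩ := hw
    set Yg : Set X := {v | g⁻¹ • v ∈ Y} with hYgdef
    have hYgcl : IsClosed Yg := hYcl.preimage (continuous_const_smul g⁻¹)
    have hYgK : ∀ k ∈ K, ∀ v ∈ Yg, k • v ∈ Yg := by
      intro k hk v hv
      have hk' : g⁻¹ * k * g ∈ K := by
        have := hnorm g⁻¹ (inv_mem hg) k hk
        rwa [inv_inv] at this
      show g⁻¹ • k • v ∈ Y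
      have heq : (g⁻¹ * k * g) • (g⁻¹ • v) = g⁻¹ • k • v := by
        rw [mul_smul, mul_smul, smul_inv_smul]
      rw [← heq]
      exact hYK _ hk' _ hv
    -- `Yg` is a minimal closed `K`-invariant set
    have hYgmin : ∀ Z : Set X, Z ⊆ Yg → Z.Nonempty → IsClosed Z →
        (∀ k ∈ K, ∀ z ∈ Z, k • z ∈ Z) → Z = Yg := by
      intro Z hZYg hZne hZcl hZK
      set Z' : Set X := {u | g • u ∈ Z} with hZ'def
      have hZ'Y : Z' ⊆ Y := by
        intro u hu
        have h2 : g⁻¹ • g • u ∈ Y := hZYg hu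
        rwa [inv_smul_smul] at h2
      have hZ'𝒮 : Z' ∈ 𝒮 := by
        refine ⟨hZ'Y.trans hYsubA, ?_, hZcl.preimage (continuous_const_smul g), ?_⟩
        · obtain ⟨z, hz⟩ := hZne
          refine ⟨g⁻¹ • z, ?_⟩
          show g • g⁻¹ • z ∈ Z
          rwa [smul_inv_smul]
        · intro k hk u hu
          have hk' : g * k * g⁻¹ ∈ K := hnorm g hg k hk
          show g • k • u ∈ Z
          have heq : (g * k * g⁻¹) • (g • u) = g • k • u := by
            rw [mul_smul, mul_smul, inv_smul_smul]
          rw [← heq]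
          exact hZK _ hk' _ hu
      have hZ'eq : Z' = Y := subset_antisymm hZ'Y (hYminimal.2 hZ'𝒮 hZ'Y)
      apply subset_antisymm hZYg
      intro v hv
      have hv' : g⁻¹ • v ∈ Z' := by rw [hZ'eq]; exact hv
      have hvz : g • g⁻¹ • v ∈ Z := hv'
      rwa [smul_inv_smul] at hvz
    -- proximality gives a common point of `Y` and `Yg`
    obtain ⟨y₀, hy₀⟩ := hYne
    obtain ⟨z, hz₁, hz₂⟩ := hproxK y₀ w
    have hzprod : z ∈ Y ×ˢ Yg := by
      have : closure ((fun k => (k • y₀, k • w)) '' (K : Set T)) ⊆ Y ×ˢ Yg := by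
        apply closure_minimal _ (hYcl.prod hYgcl)
        rintro p ⟨k, hk, rfl⟩
        exact ⟨hYK k hk y₀ hy₀, hYgK k hk w hgw⟩
      exact this hz₁
    have hzdiag : z.1 = z.2 := hz₂
    have hzY : z.1 ∈ Y ∩ Yg := ⟨hzprod.1, hzdiag ▸ hzprod.2⟩
    have : Y ∩ Yg = Yg := by
      refine hYgmin _ Set.inter_subset_right ⟨z.1, hzY⟩ (hYcl.inter hYgcl) ?_
      intro k hk v hv
      exact ⟨hYK k hk v hv.1, hYgK k hk v hv.2⟩
    have hYgY : Yg ⊆ Y := this ▸ Set.inter_subset_left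
    exact hYgY hgw
  exact Set.eq_univ_of_forall fun w => hYsubA (hAuniv w)

/-- Enlarging a co-compact subgroup keeps it co-compact. -/
lemma compactSpace_quotient_mono (H K : Subgroup T) (hle : H ≤ K)
    (hcc : CompactSpace (T ⧸ H)) : CompactSpace (T ⧸ K) := by
  let f : T ⧸ H → T ⧸ K := fun q =>
    Quotient.liftOn' q (QuotientGroup.mk : T → T ⧸ K) (fun a b hab => by
      apply Quotient.sound'
      exact QuotientGroup.leftRel_apply.mpr (hle (QuotientGroup.leftRel_apply.mp hab)))
  have hcont : Continuous f :=
    Continuous.quotient_liftOn' QuotientGroup.continuous_mk _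
  have hsurj : Function.Surjective f := by
    intro q
    obtain ⟨t, rfl⟩ := QuotientGroup.mk_surjective q
    exact ⟨QuotientGroup.mk t, rfl⟩
  refine ⟨?_⟩
  rw [← hsurj.range_eq, ← Set.image_univ]
  exact isCompact_univ.image hcont

/-- Normality relation between subgroups passes to topological closures. -/
lemma conj_mem_topologicalClosure (A B : Subgroup T)
    (h : ∀ b ∈ B, ∀ a ∈ A, b * a * b⁻¹ ∈ A) :
    ∀ g ∈ B.topologicalClosure, ∀ k ∈ A.topologicalClosure,
      g * k * g⁻¹ ∈ A.topologicalClosure := by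
  have hAc : (A.topologicalClosure : Set T) = closure (A : Set T) :=
    Subgroup.topologicalClosure_coe
  have hBc : (B.topologicalClosure : Set T) = closure (B : Set T) :=
    Subgroup.topologicalClosure_coe
  have step1 : ∀ b ∈ B, ∀ k ∈ closure (A : Set T), b * k * b⁻¹ ∈ closure (A : Set T) := by
    intro b hb
    have hmt : Set.MapsTo (fun a => b * a * b⁻¹) (A : Set T) (closure (A : Set T)) :=
      fun a ha => subset_closure (h b hb a ha)
    have hcont : Continuous (fun a : T => b * a * b⁻¹) :=
      (continuous_const.mul continuous_id).mul continuous_const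
    have := hmt.closure hcont
    intro k hk
    exact closure_minimal (fun y hy => hy) isClosed_closure (this hk)
  intro g hg k hk
  rw [← SetLike.mem_coe, hAc] at hk ⊢
  rw [← SetLike.mem_coe, hBc] at hg
  have hclosed : IsClosed {b : T | b * k * b⁻¹ ∈ closure (A : Set T)} :=
    isClosed_closure.preimage ((continuous_id.mul continuous_const).mul continuous_inv)
  exact closure_minimal (fun b hb => step1 b hb k hk) hclosed hg

end Aux

/-- If the `T`-action on a compact Hausdorff space `X` is minimal and proximal and `H` is a
subnormal co-compact closed subgroup of `T`, then the restricted `H`-action is minimal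
and proximal. -/
theorem minimal_proximal_of_subnormal_cocompact
    {T X : Type*} [Group T] [TopologicalSpace T] [IsTopologicalGroup T] [T2Space T]
    [TopologicalSpace X] [CompactSpace X] [T2Space X] [MulAction T X] [ContinuousSMul T X]
    (hmin : ∀ x : X, Dense (orbit T x))
    (hprox : ∀ x₁ x₂ : X,
      (closure (Set.range fun t : T => (t • x₁, t • x₂)) ∩ Set.diagonal X).Nonempty)
    (H : Subgroup T) (hHclosed : IsClosed (H : Set T))
    (hcc : CompactSpace (T ⧸ H)) (hsub : H.IsSubnormal') :
    (∀ x : X, Dense (orbit H x)) ∧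
      ∀ x₁ x₂ : X,
        (closure (Set.range fun s : H => (s • x₁, s • x₂)) ∩ Set.diagonal X).Nonempty := by
  obtain ⟨n, c, hc0, hclast, hcstep⟩ := hsub
  -- define the property of a subgroup acting minimally and proximally
  set P : Subgroup T → Prop := fun S =>
    (∀ x : X, Dense ((fun g => g • x) '' (S : Set T))) ∧
      ∀ x₁ x₂ : X,
        (closure ((fun g => (g • x₁, g • x₂)) '' (S : Set T)) ∩ Set.diagonal X).Nonempty
    with hPdef
  -- the chain is increasing
  have hcmono : ∀ i : Fin (n + 1), c 0 ≤ c i := by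
    intro i
    induction i using Fin.induction with
    | zero => exact le_rfl
    | succ i ih => exact ih.trans (hcstep i).1
  have hHle : ∀ i : Fin (n + 1), H ≤ c i := fun i => hc0 ▸ hcmono i
  -- all closures of chain members are co-compact
  have hccI : ∀ i : Fin (n + 1), CompactSpace (T ⧸ (c i).topologicalClosure) := fun i =>
    compactSpace_quotient_mono H _ ((hHle i).trans (Subgroup.le_topologicalClosure _)) hcc
  -- normality along the chain, pointwise
  have hnormi : ∀ i : Fin n, ∀ g ∈ c i.succ, ∀ k ∈ c i.castSucc,
      g * k * g⁻¹ ∈ c i.castSucc := by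
    intro i g hg k hk
    have hkin : k ∈ c i.succ := (hcstep i).1 hk
    have := (hcstep i).2.conj_mem ⟨k, hkin⟩ (by rwa [Subgroup.mem_subgroupOf]) ⟨g, hg⟩
    simpa [Subgroup.mem_subgroupOf] using this
  -- the property holds for any subgroup whose carrier is everything
  have htopP : ∀ S : Subgroup T, (S : Set T) = Set.univ → P S := by
    intro S hS
    constructor
    · intro x
      rw [hS, Set.image_univ]
      exact hmin x
    · intro x₁ x₂
      rw [hS, Set.image_univ]
      exact hprox x₁ x₂
  -- downward induction along the chain
  have key : ∀ j : ℕ, j ≤ n → P ((c ⟨n - j, by omega⟩).topologicalClosure) := by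
    intro j
    induction j with
    | zero =>
      intro _
      apply htopP
      have hlast : (⟨n - 0, by omega⟩ : Fin (n + 1)) = Fin.last n := by
        apply Fin.ext; simp [Fin.last]
      rw [hlast, hclast, Subgroup.topologicalClosure_coe, Subgroup.coe_top, closure_univ]
    | succ j ih =>
      intro hj
      have hj' : j ≤ n := Nat.le_of_succ_le hj
      have ihP := ih hj'
      set i : Fin n := ⟨n - (j + 1), by omega⟩ with hidef
      have hsucc : i.succ = (⟨n - j, by omega⟩ : Fin (n + 1)) := by
        apply Fin.ext
        simp only [Fin.val_succ, hidef]
        omega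
      set G : Subgroup T := (c i.succ).topologicalClosure with hGdef
      set K : Subgroup T := (c i.castSucc).topologicalClosure with hKdef
      have hKG : K ≤ G :=
        Subgroup.topologicalClosure_minimal _
          ((hcstep i).1.trans (Subgroup.le_topologicalClosure _))
          (Subgroup.isClosed_topologicalClosure _)
      have hGc : IsClosed (G : Set T) := Subgroup.isClosed_topologicalClosure _
      have hccK : CompactSpace (T ⧸ K) := hccI i.castSucc
      have hnorm' : ∀ g ∈ G, ∀ k ∈ K, g * k * g⁻¹ ∈ K :=
        conj_mem_topologicalClosure _ _ (hnormi i)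
      have ihP' : P G := by rw [hGdef, hsucc]; exact ihP
      have hproxK := prox_restrict K G hKG hGc hccK ihP'.2
      have hminK := min_restrict K G hKG hGc hccK hnorm' ihP'.1 hproxK
      exact ⟨hminK, hproxK⟩
  have hfinal := key n le_rfl
  have h00 : (⟨n - n, by omega⟩ : Fin (n + 1)) = 0 := by
    apply Fin.ext; simp
  rw [h00, hc0] at hfinal
  have hHcl : (H.topologicalClosure : Set T) = (H : Set T) := by
    rw [Subgroup.topologicalClosure_coe, hHclosed.closure_eq]
  constructor
  · intro x
    have hd := hfinal.1 x
    rw [hHcl] at hd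
    have horb : orbit H x = (fun g : T => g • x) '' (H : Set T) := by
      ext y
      simp only [mem_orbit_iff, Set.mem_image, SetLike.mem_coe, Subgroup.smul_def]
      constructor
      · rintro ⟨⟨g, hg⟩, rfl⟩; exact ⟨g, hg, rfl⟩
      · rintro ⟨g, hg, rfl⟩; exact ⟨⟨g, hg⟩, rfl⟩
    rw [horb]
    exact hd
  · intro x₁ x₂
    have hp := hfinal.2 x₁ x₂
    rw [hHcl] at hp
    have hrange : (Set.range fun s : H => (s • x₁, s • x₂))
        = (fun g : T => (g • x₁, g • x₂)) '' (H : Set T) := by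
      ext p
      simp only [Set.mem_range, Set.mem_image, SetLike.mem_coe, Subgroup.smul_def]
      constructor
      · rintro ⟨⟨g, hg⟩, rfl⟩; exact ⟨g, hg, rfl⟩
      · rintro ⟨g, hg, rfl⟩; exact ⟨⟨g, hg⟩, rfl⟩
    rw [hrange]
    exact hp
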